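/- Let k ≥ 2 and suppose nonnegative integers n ≥ m ≥ l ≥ 0, d ≥ 2, 1 ≤ a ≤ 9 satisfy L_n^{(k)} · L_m^{(k)} · L_l^{(k)} = a·(10^d − 1)/9, and assume n > 25. Then (a/9)·10^d ≠ f_k(α) · (2α − 1) · α^{n−1} · L_m^{(k)} · L_l^{(k)}, where α is the dominant root of x^k − x^{k−1} − ⋯ − x − 1. (Equivalently, the linear form Λ_3 = α^{−(n−1)}·10^d·f_k(α)^{−1}(2α−1)^{−1}·(L_m^{(k)})^{−1}(L_l^{(k)})^{−1}·(a/9) − 1 is nonzero.) -/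

import Mathlib

/-- The `k`-generalized Lucas sequence: `L 0 = 2`, `L 1 = 1`, and for `n ≥ 2`,
`L n = L (n-1) + L (n-2) + ⋯ + L (n-k)`, where terms with negative index count as `0`. -/
def lucasK (k : ℕ) : ℕ → ℕ
  | 0 => 2
  | 1 => 1
  | n + 2 => ∑ j ∈ Finset.range k, if _ : j ≤ n + 1 then lucasK k (n + 1 - j) else 0
termination_by n => n
decreasing_by omega

-- lucasK positivity and growth
lemma lucasK_pos (k : ℕ) (hk : 1 ≤ k) : ∀ n, 0 < lucasK k n := by
  intro n
  induction n using Nat.strong_induction_on with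
  | _ n ih =>
    match n with
    | 0 => simp [lucasK]
    | 1 => simp [lucasK]
    | n + 2 =>
      rw [lucasK]
      have h0 : 0 ∈ Finset.range k := by simp; omega
      refine Finset.sum_pos' (fun i _ => Nat.zero_le _) ⟨0, h0, ?_⟩
      simp
      exact ih (n+1) (by omega)

lemma lucasK_step (k : ℕ) (hk : 2 ≤ k) (n : ℕ) :
    lucasK k (n+1) + lucasK k n ≤ lucasK k (n+2) := by
  rw [lucasK]
  have hsub : ({0, 1} : Finset ℕ) ⊆ Finset.range k := by
    intro x hx; simp at hx; rcases hx with h | h <;> simp [h] <;> omega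
  calc lucasK k (n+1) + lucasK k n
      = ∑ j ∈ ({0,1} : Finset ℕ), if _ : j ≤ n + 1 then lucasK k (n + 1 - j) else 0 := by
        rw [Finset.sum_insert (by simp), Finset.sum_singleton]
        simp
    _ ≤ _ := Finset.sum_le_sum_of_subset hsub

lemma lucasK_lb (k : ℕ) (hk : 2 ≤ k) : ∀ n, n + 3 ≤ lucasK k (n + 2) := by
  intro n
  induction n with
  | zero =>
    have := lucasK_step k hk 0
    simp [lucasK] at this ⊢
    omega
  | succ n ih =>
    have h1 := lucasK_step k hk (n+1)
    have h2 := lucasK_pos k (by omega) (n+1)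
    simp only [show n+1+2 = n+3 from rfl, show n+1+1 = n+2 from rfl] at h1 ⊢
    omega

open Polynomial

lemma Lambda3_aux (k n M N : ℕ) (hk : 2 ≤ k)
    (α : ℝ) (hαgt : 2*(k:ℝ)/((k:ℝ)+1) < α)
    (hint : IsIntegral ℤ α)
    (P : ℤ[X]) (hPdef : P = minpoly ℤ α)
    (Qp : ℤ[X]) (hQp : Qp = X^(k+1) - C 2 * X^k + 1)
    (Q2 : ℤ[X]) (hQ2def : Q2 = C ((N:ℤ)) * (C ((k:ℤ)+1) * X - C (2*(k:ℤ))) -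
      C ((M:ℤ)) * (X^(n-1) * (X - 1) * (C 2 * X - 1)))
    (hdvd1 : P ∣ Qp) (hdvd2 : P ∣ Q2)
    (hNM : 18 * M < N) (hM9 : 9 ≤ M) : False := by
  have hPm : P.Monic := hPdef ▸ minpoly.monic hint
  have hD1 : 1 ≤ P.natDegree := hPdef ▸ minpoly.natDegree_pos hint
  set D := P.natDegree with hDdef
  set f : ℤ →+* ℂ := Int.castRingHom ℂ with hf
  set Pc : ℂ[X] := P.map f with hPc
  have hPcm : Pc.Monic := hPm.map f
  have hsplits : Splits Pc := IsAlgClosed.splits Pc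
  set R : Multiset ℂ := Pc.roots with hR
  have hcard : R.card = D := by
    rw [hR, splits_iff_card_roots.mp hsplits, hPc]
    exact hPm.natDegree_map f
  have hprod : Pc = (R.map fun z => X - C z).prod :=
    hsplits.eq_prod_roots_of_monic hPcm
  have heval : ∀ w : ℂ, Pc.eval w = (R.map fun z => w - z).prod := by
    intro w
    conv_lhs => rw [hprod]
    rw [eval_multiset_prod, Multiset.map_map]
    simp
  have hnn : ∀ (s : Multiset ℂ), ‖s.prod‖₊ = (s.map fun z => ‖z‖₊).prod := by
    intro s
    induction s using Multiset.induction_on with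
    | empty => simp
    | cons a s ih => simp [nnnorm_mul, ih]
  have hk1ne : ((k:ℂ)+1) ≠ 0 := by
    have := Nat.cast_add_one_ne_zero (R := ℂ) k
    simpa using this
  set c : ℂ := 2*(k:ℂ)/((k:ℂ)+1) with hc
  -- roots are roots of Qp and Q2
  have hzP : ∀ z ∈ R, Pc.eval z = 0 := fun z hz => isRoot_of_mem_roots hz
  have hzQp : ∀ z ∈ R, z^(k+1) - 2*z^k + 1 = 0 := by
    intro z hz
    have h0 : aeval z Qp = 0 := by
      rw [aeval_def, eval₂_eq_eval_map]
      exact eval_eq_zero_of_dvd_of_eval_eq_zero (Polynomial.map_dvd _ hdvd1) (hzP z hz)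
    rw [hQp] at h0
    simp only [map_add, map_sub, map_mul, map_pow, map_one, aeval_X, aeval_C,
      algebraMap_int_eq, eq_intCast, map_intCast, map_natCast, map_ofNat] at h0
    push_cast at h0
    linear_combination h0
  have hzQ2 : ∀ z ∈ R, (N:ℂ) * (((k:ℂ)+1)*z - 2*(k:ℂ)) = (M:ℂ) * (z^(n-1)*(z-1)*(2*z-1)) := by
    intro z hz
    have h0 : aeval z Q2 = 0 := by
      rw [aeval_def, ← algebraMap_int_eq] at *
      rw [eval₂_eq_eval_map]
      exact eval_eq_zero_of_dvd_of_eval_eq_zero (Polynomial.map_dvd _ hdvd2) (hzP z hz)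
    rw [hQ2def] at h0
    simp only [map_add, map_sub, map_mul, map_pow, map_one, aeval_X, aeval_C,
      algebraMap_int_eq, eq_intCast, map_intCast, map_natCast, map_ofNat] at h0
    push_cast at h0
    linear_combination h0
  -- norm bound on roots
  have hzb : ∀ z ∈ R, ‖z‖ ≤ 9/4 := by
    intro z hz
    by_contra hgt
    push_neg at hgt
    have hq := hzQp z hz
    have h1 : ‖z‖^(k+1) ≤ 2*‖z‖^k + 1 := by
      have : z^(k+1) = 2*z^k - 1 := by linear_combination hq
      calc ‖z‖^(k+1) = ‖z^(k+1)‖ := (norm_pow z (k+1)).symm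
        _ = ‖2*z^k - 1‖ := by rw [this]
        _ ≤ ‖2*z^k‖ + ‖(1:ℂ)‖ := norm_sub_le _ _
        _ = 2*‖z‖^k + 1 := by simp [norm_mul, norm_pow]
    have h2 : (9/4:ℝ)^k ≤ ‖z‖^k := pow_le_pow_left₀ (by norm_num) hgt.le k
    have h3 : (9/4:ℝ)^2 ≤ (9/4:ℝ)^k := pow_le_pow_right₀ (by norm_num) hk
    have h4 : ‖z‖^(k+1) = ‖z‖^k * ‖z‖ := pow_succ _ _
    nlinarith [h1, h2, h3, h4, hgt]
  -- product identity
  have hprodEq : (R.map fun z => (N:ℂ) * (((k:ℂ)+1)*z - 2*(k:ℂ))).prod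
      = (R.map fun z => (M:ℂ) * (z^(n-1)*(z-1)*(2*z-1))).prod := by
    exact congrArg Multiset.prod (Multiset.map_congr rfl hzQ2)
  -- LHS factorization
  have hL : (R.map fun z => (N:ℂ) * (((k:ℂ)+1)*z - 2*(k:ℂ))).prod
      = (-(N:ℂ) * ((k:ℂ)+1))^D * Pc.eval c := by
    have hfun : (fun z => (N:ℂ) * (((k:ℂ)+1)*z - 2*(k:ℂ)))
        = fun z => (-(N:ℂ) * ((k:ℂ)+1)) * (c - z) := by
      funext z
      rw [hc]
      field_simp
      ring
    rw [hfun, heval c]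
    rw [show (fun z => (-(N:ℂ) * ((k:ℂ)+1)) * (c - z))
          = fun z => (fun _ : ℂ => (-(N:ℂ) * ((k:ℂ)+1))) z * (fun z => c - z) z from rfl,
      Multiset.prod_map_mul, Multiset.map_const', Multiset.prod_replicate, hcard]
  -- integrality of the scaled evaluation
  have hs := scaleRoots_eval₂_mul (p := P) f c ((k:ℤ)+1)
  have hfk : f ((k:ℤ)+1) = ((k:ℂ)+1) := by simp [eq_intCast]
  have hfc : f ((k:ℤ)+1) * c = f (2*(k:ℤ)) := by
    rw [hfk, hc, eq_intCast]
    push_cast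
    field_simp
  set I₁ : ℤ := (P.scaleRoots ((k:ℤ)+1)).eval (2*(k:ℤ)) with hI₁def
  have hIc : (I₁ : ℂ) = ((k:ℂ)+1)^D * Pc.eval c := by
    rw [hfc] at hs
    rw [eval₂_at_apply, eval₂_eq_eval_map, ← hPc] at hs
    rw [show ((I₁:ℤ):ℂ) = f I₁ from (eq_intCast f I₁).symm, hI₁def, hs, hfk, hDdef]
  have hI1ne : I₁ ≠ 0 := by
    intro h0
    have hPceval : Pc.eval c = 0 := by
      rw [h0] at hIc
      simp only [Int.cast_zero] at hIc
      have hkD : ((k:ℂ)+1)^D ≠ 0 := pow_ne_zero _ hk1ne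
      field_simp at hIc
      exact (mul_eq_zero.mp hIc.symm).resolve_left hkD
    -- then α would be rational
    have hq : IsIntegral ℚ α := hint.tower_top
    have hminq : minpoly ℚ α = P.map (algebraMap ℤ ℚ) := by
      rw [hPdef]
      exact minpoly.isIntegrallyClosed_eq_field_fractions' ℚ hint
    set cq : ℚ := 2*(k:ℚ)/((k:ℚ)+1) with hcq
    have hk1neq : ((k:ℚ)+1) ≠ 0 := by
      have := Nat.cast_add_one_ne_zero (R := ℚ) k
      simpa using this
    have hcast : ((cq : ℚ) : ℂ) = c := by rw [hcq, hc]; push_cast; ring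
    have hcomp : (algebraMap ℚ ℂ).comp (algebraMap ℤ ℚ) = f := RingHom.ext_int _ _
    have hmapmap : (P.map (algebraMap ℤ ℚ)).map (algebraMap ℚ ℂ) = Pc := by
      rw [Polynomial.map_map, hcomp, hPc]
    have hPq0 : (P.map (algebraMap ℤ ℚ)).eval cq = 0 := by
      have h1 : Pc.eval c = ((algebraMap ℚ ℂ)) ((P.map (algebraMap ℤ ℚ)).eval cq) := by
        conv_lhs => rw [← hmapmap, ← hcast]
        rw [← eq_ratCast (algebraMap ℚ ℂ) cq, Polynomial.eval_map, eval₂_at_apply]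
      rw [hPceval] at h1
      exact (map_eq_zero_iff _ (algebraMap ℚ ℂ).injective).mp h1.symm
    have hdvdXC : (X - C cq) ∣ minpoly ℚ α := by
      rw [hminq]
      exact dvd_iff_isRoot.mpr hPq0
    obtain ⟨v, hv⟩ := hdvdXC
    have hirr := minpoly.irreducible hq
    rcases hirr.isUnit_or_isUnit hv with hu | hu
    · exact not_isUnit_X_sub_C cq hu
    · obtain ⟨r, hru, hrv⟩ := Polynomial.isUnit_iff.mp hu
      have haev : aeval α (minpoly ℚ α) = 0 := minpoly.aeval ℚ α
      rw [hv, ← hrv] at haev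
      simp only [map_mul, map_sub, aeval_X, aeval_C] at haev
      have hrne : (algebraMap ℚ ℝ) r ≠ 0 := by
        simpa using hru.ne_zero
      have hαq : α = (algebraMap ℚ ℝ) cq := by
        rcases mul_eq_zero.mp haev with h1 | h1
        · linarith [sub_eq_zero.mp h1]
        · exact absurd h1 hrne
      rw [hαq] at hαgt
      have : ((cq:ℚ):ℝ) = 2*(k:ℝ)/((k:ℝ)+1) := by rw [hcq]; push_cast; ring
      rw [show (algebraMap ℚ ℝ) cq = ((cq:ℚ):ℝ) from rfl, this] at hαgt
      exact lt_irrefl _ hαgt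
  -- passing to nnnorms
  have hnormI : (1:NNReal) ≤ ‖((k:ℂ)+1)^D * Pc.eval c‖₊ := by
    rw [← hIc, ← NNReal.coe_le_coe, coe_nnnorm, Complex.norm_intCast, NNReal.coe_one]
    exact_mod_cast Int.one_le_abs hI1ne
  -- nnnorm of product of roots is 1
  have hP0 : P.eval 0 = 1 ∨ P.eval 0 = -1 := by
    have hQp0 : Qp.eval 0 = 1 := by
      rw [hQp]
      simp only [eval_add, eval_sub, eval_pow, eval_mul, eval_X, eval_C, eval_one]
      rw [zero_pow (by omega : k + 1 ≠ 0), zero_pow (by omega : k ≠ 0)]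
      norm_num
    have hdvd0 : P.eval 0 ∣ (1:ℤ) := by
      obtain ⟨q, hq⟩ := hdvd1
      rw [← hQp0, hq, eval_mul]
      exact Dvd.intro _ rfl
    exact Int.isUnit_iff.mp (isUnit_of_dvd_one hdvd0)
  have hPc0 : ‖Pc.eval 0‖₊ = 1 := by
    have : Pc.eval 0 = ((P.eval 0 : ℤ) : ℂ) := by
      rw [hPc, Polynomial.eval_map, show (0:ℂ) = f 0 from (map_zero f).symm,
        eval₂_at_apply, eq_intCast]
    rw [this]
    rcases hP0 with h | h <;> rw [h] <;> simp
  have hprodz : (R.map fun z => ‖z‖₊).prod = 1 := by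
    have h1 : ‖Pc.eval 0‖₊ = (R.map fun z => ‖z‖₊).prod := by
      rw [heval 0, hnn, Multiset.map_map]
      congr 1
      apply Multiset.map_congr rfl
      intro z _
      simp
    rw [← h1, hPc0]
  -- upper bound for right side
  have hRb : ‖(R.map fun z => (M:ℂ) * (z^(n-1)*(z-1)*(2*z-1))).prod‖₊
      ≤ ((M:NNReal) * (143/8))^D := by
    rw [hnn, Multiset.map_map]
    have hpt : ∀ z ∈ R, (‖((M:ℂ) * (z^(n-1)*(z-1)*(2*z-1)))‖₊ : NNReal)
        ≤ ((M:NNReal) * (143/8)) * (‖z‖₊)^(n-1) := by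
      intro z hz
      have hzn : ‖z‖ ≤ 9/4 := hzb z hz
      have h1 : ‖z - 1‖₊ ≤ 13/4 := by
        rw [← NNReal.coe_le_coe, coe_nnnorm]
        calc ‖z - 1‖ ≤ ‖z‖ + ‖(1:ℂ)‖ := norm_sub_le _ _
          _ ≤ 13/4 := by rw [norm_one]; push_cast; linarith
      have h2 : ‖2*z - 1‖₊ ≤ 11/2 := by
        rw [← NNReal.coe_le_coe, coe_nnnorm]
        calc ‖2*z - 1‖ ≤ ‖(2:ℂ)*z‖ + ‖(1:ℂ)‖ := norm_sub_le _ _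
          _ ≤ 11/2 := by
            rw [norm_one, norm_mul]
            simp only [Complex.norm_ofNat]
            push_cast
            linarith
      have : (‖((M:ℂ) * (z^(n-1)*(z-1)*(2*z-1)))‖₊ : NNReal)
          = (M:NNReal) * ((‖z‖₊)^(n-1) * ‖z-1‖₊ * ‖2*z-1‖₊) := by
        simp [nnnorm_mul, nnnorm_pow, Complex.nnnorm_natCast]
      rw [this]
      calc (M:NNReal) * ((‖z‖₊)^(n-1) * ‖z-1‖₊ * ‖2*z-1‖₊)
          ≤ (M:NNReal) * ((‖z‖₊)^(n-1) * (13/4) * (11/2)) := by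
            apply mul_le_mul_right ?_ _
            exact mul_le_mul' (mul_le_mul' le_rfl h1) h2
        _ = ((M:NNReal) * (143/8)) * (‖z‖₊)^(n-1) := by
            have hq : ((13:NNReal)/4) * (11/2) = 143/8 := by
              rw [← NNReal.coe_inj]; push_cast; norm_num
            rw [mul_comm ((‖z‖₊)^(n-1)) ((13:NNReal)/4)]
            rw [show (M:NNReal) * ((13:NNReal)/4 * (‖z‖₊)^(n-1) * (11/2))
                  = (M:NNReal) * (((13:NNReal)/4) * (11/2)) * (‖z‖₊)^(n-1) from by ring, hq]
    calc (R.map fun z => (‖((M:ℂ) * (z^(n-1)*(z-1)*(2*z-1)))‖₊ : NNReal)).prod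
        ≤ (R.map fun z => ((M:NNReal) * (143/8)) * (‖z‖₊)^(n-1)).prod :=
          Multiset.prod_map_le_prod_map _ _ hpt
      _ = ((M:NNReal) * (143/8))^D * ((R.map fun z => ‖z‖₊).prod)^(n-1) := by
          rw [show (fun z : ℂ => ((M:NNReal) * (143/8)) * (‖z‖₊)^(n-1))
                = fun z => (fun _ : ℂ => ((M:NNReal) * (143/8))) z
                    * (fun z : ℂ => (‖z‖₊)^(n-1)) z from rfl,
            Multiset.prod_map_mul, Multiset.map_const', Multiset.prod_replicate, hcard,
            ← Multiset.prod_map_pow]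
      _ = ((M:NNReal) * (143/8))^D := by rw [hprodz, one_pow, mul_one]
  -- lower bound for left side
  have hLb : ((N:NNReal))^D ≤ ‖(R.map fun z => (N:ℂ) * (((k:ℂ)+1)*z - 2*(k:ℂ))).prod‖₊ := by
    rw [hL, nnnorm_mul, nnnorm_pow, nnnorm_mul, nnnorm_neg, Complex.nnnorm_natCast]
    calc ((N:NNReal))^D = ((N:NNReal))^D * 1 := (mul_one _).symm
      _ ≤ ((N:NNReal))^D * (‖((k:ℂ)+1)‖₊^D * ‖Pc.eval c‖₊) := by
          apply mul_le_mul_right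
          calc (1:NNReal) ≤ ‖((k:ℂ)+1)^D * Pc.eval c‖₊ := hnormI
            _ = ‖((k:ℂ)+1)‖₊^D * ‖Pc.eval c‖₊ := by rw [nnnorm_mul, nnnorm_pow]
      _ = ((N:NNReal) * ‖((k:ℂ)+1)‖₊)^D * ‖Pc.eval c‖₊ := by rw [mul_pow]; ring
  -- combine
  have hfinal : ((N:NNReal))^D ≤ ((M:NNReal) * (143/8))^D := by
    calc ((N:NNReal))^D ≤ _ := hLb
      _ = ‖(R.map fun z => (M:ℂ) * (z^(n-1)*(z-1)*(2*z-1))).prod‖₊ := by rw [hprodEq]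
      _ ≤ ((M:NNReal) * (143/8))^D := hRb
  have hNle : (N:NNReal) ≤ (M:NNReal) * (143/8) :=
    (pow_le_pow_iff_left₀ zero_le zero_le (by omega)).mp hfinal
  have hNleR : (N:ℝ) ≤ (M:ℝ) * (143/8) := by
    have := NNReal.coe_le_coe.mpr hNle
    push_cast at this
    linarith [this]
  have h18 : (18:ℝ) * (M:ℝ) < (N:ℝ) := by exact_mod_cast hNM
  have hM9R : (9:ℝ) ≤ (M:ℝ) := by exact_mod_cast hM9
  linarith

theorem Lambda3_nonzero
    (k n m l d a : ℕ) (hk : 2 ≤ k) (hnm : m ≤ n) (hml : l ≤ m)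
    (hd : 2 ≤ d) (ha1 : 1 ≤ a) (ha9 : a ≤ 9)
    (heq : lucasK k n * lucasK k m * lucasK k l = a * ((10 ^ d - 1) / 9))
    (hn : 25 < n)
    (α : ℝ) (hroot : α ^ k = ∑ i ∈ Finset.range k, α ^ i)
    (hα₁ : 2 * (1 - (2 : ℝ) ^ (-(k : ℤ))) < α) (hα₂ : α < 2) :
    ((a : ℝ) / 9) * 10 ^ d ≠
      ((α - 1) / (2 + ((k : ℝ) + 1) * (α - 2))) * (2 * α - 1) *
        α ^ ((n : ℤ) - 1) * (lucasK k m : ℝ) * (lucasK k l : ℝ) := by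
  intro h
  have hk0 : (0:ℝ) < (k:ℝ)+1 := by positivity
  have h2kpos : (0:ℝ) < (2:ℝ)^k := by positivity
  have he : (2:ℝ)^(-(k:ℤ)) = ((2:ℝ)^k)⁻¹ := by
    rw [zpow_neg, zpow_natCast]
  have h2k : (k:ℝ)+1 ≤ 2^k := by exact_mod_cast Nat.lt_two_pow_self (n := k)
  have hαgt : 2*(k:ℝ)/((k:ℝ)+1) < α := by
    have hx : ((2:ℝ)^k)⁻¹ * ((k:ℝ)+1) ≤ 1 := by
      rw [inv_mul_le_iff₀ h2kpos]; simpa using h2k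
    rw [he] at hα₁
    rw [div_lt_iff₀ hk0]
    nlinarith [hα₁]
  have hδ : 0 < ((k:ℝ)+1)*α - 2*(k:ℝ) := by
    rw [div_lt_iff₀ hk0] at hαgt; linarith
  have hQα : α^(k+1) - 2*α^k + 1 = 0 := by
    linear_combination (α - 1) * hroot + geom_sum_mul α k
  -- clear denominators in h
  have hznat : α ^ ((n:ℤ) - 1) = α ^ (n-1 : ℕ) := by
    have h1 : ((n-1:ℕ):ℤ) = (n:ℤ)-1 := by
      push_cast [Nat.cast_sub (by omega : 1 ≤ n)]; ring
    rw [← h1, zpow_natCast]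
  rw [hznat, show 2 + ((k:ℝ) + 1) * (α - 2) = ((k:ℝ)+1)*α - 2*(k:ℝ) from by ring] at h
  field_simp [hδ.ne'] at h
  -- polynomials
  set Qp : ℤ[X] := X^(k+1) - C 2 * X^k + 1 with hQp
  have hQpm : Qp.Monic := by
    have hdeg : (C 2 * X^k - 1 : ℤ[X]).degree < (k+1 : ℕ) := by
      apply lt_of_le_of_lt (degree_sub_le _ _)
      simp only [sup_lt_iff]
      constructor
      · apply lt_of_le_of_lt (degree_C_mul_X_pow_le k (2:ℤ))
        exact_mod_cast Nat.lt_succ_self k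
      · apply lt_of_le_of_lt degree_one_le
        exact_mod_cast Nat.succ_pos k
    have := monic_X_pow_sub (p := C 2 * X^k - 1) hdeg
    have heq2 : (X:ℤ[X])^(k+1) - (C 2 * X^k - 1) = Qp := by rw [hQp]; ring
    rwa [heq2] at this
  have hQpa : aeval α Qp = 0 := by
    rw [hQp]
    simp only [map_add, map_sub, map_mul, map_pow, map_one, aeval_X, aeval_C,
      algebraMap_int_eq, eq_intCast, map_intCast, map_natCast, map_ofNat]
    push_cast
    linear_combination hQα
  have hint : IsIntegral ℤ α := ⟨Qp, hQpm, hQpa⟩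
  set Q2 : ℤ[X] := C (((a * 10^d : ℕ)) : ℤ) * (C ((k:ℤ)+1) * X - C (2*(k:ℤ))) -
      C (((9 * lucasK k m * lucasK k l : ℕ)) : ℤ) * (X^(n-1) * (X - 1) * (C 2 * X - 1))
    with hQ2def
  have hQ2a : aeval α Q2 = 0 := by
    rw [hQ2def]
    simp only [map_add, map_sub, map_mul, map_pow, map_one, aeval_X, aeval_C,
      algebraMap_int_eq, eq_intCast, map_intCast, map_natCast, map_ofNat]
    push_cast
    have hδ' : α * (↑k + 1) - ↑k * 2 ≠ 0 := by linarith
    rw [eq_div_iff hδ'] at h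
    linear_combination h
  set P : ℤ[X] := minpoly ℤ α with hPdef
  have hdvd1 : P ∣ Qp := minpoly.isIntegrallyClosed_dvd hint hQpa
  have hdvd2 : P ∣ Q2 := minpoly.isIntegrallyClosed_dvd hint hQ2a
  -- numeric facts
  have h9 : (9:ℕ) ∣ 10^d - 1 := by
    have h10 : 10^d % 9 = 1 := by
      rw [Nat.pow_mod]
      norm_num
    have h1 : 1 ≤ 10^d := Nat.one_le_pow _ _ (by norm_num)
    omega
  have hrep : a * 10^d = 9 * (lucasK k n * lucasK k m * lucasK k l) + a := by
    have h1 : 9 * ((10^d - 1)/9) = 10^d - 1 := Nat.mul_div_cancel' h9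
    have h2 : 9 * (lucasK k n * lucasK k m * lucasK k l) = a * (10^d - 1) := by
      rw [heq, ← Nat.mul_assoc, Nat.mul_comm 9 a, Nat.mul_assoc, h1]
    have h3 : 1 ≤ 10^d := Nat.one_le_pow _ _ (by norm_num)
    have h4 : a * (10^d - 1) = a * 10^d - a := by
      rw [Nat.mul_sub, Nat.mul_one]
    have h5 : a ≤ a * 10^d := Nat.le_mul_of_pos_right a (by positivity)
    omega
  have hLn : 27 ≤ lucasK k n := by
    have h1 : n - 2 + 3 ≤ lucasK k (n - 2 + 2) := lucasK_lb k hk (n-2)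
    rw [show n - 2 + 2 = n from by omega] at h1
    omega
  have hLm : 1 ≤ lucasK k m := lucasK_pos k (by omega) m
  have hLl : 1 ≤ lucasK k l := lucasK_pos k (by omega) l
  have hNM : 18 * (9 * lucasK k m * lucasK k l) < a * 10^d := by
    have h1 : 27 * (9 * lucasK k m * lucasK k l)
        ≤ lucasK k n * (9 * lucasK k m * lucasK k l) :=
      Nat.mul_le_mul_right _ hLn
    have h2 : lucasK k n * (9 * lucasK k m * lucasK k l)
        = 9 * (lucasK k n * lucasK k m * lucasK k l) := by ring
    have h3 : 1 ≤ 9 * lucasK k m * lucasK k l := by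
      have := Nat.mul_le_mul (Nat.mul_le_mul (le_refl 9) hLm) hLl
      omega
    omega
  have hM9 : 9 ≤ 9 * lucasK k m * lucasK k l := by
    have := Nat.mul_le_mul (Nat.mul_le_mul (le_refl 9) hLm) hLl
    omega
  exact Lambda3_aux k n (9 * lucasK k m * lucasK k l) (a * 10^d) hk α hαgt hint
    P hPdef Qp hQp Q2 hQ2def hdvd1 hdvd2 hNM hM9
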